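/- Let φ be a measure-preserving map mixing with respect to a finite measure μ, {C_i} a nontrivial finite partition, and W_{i,j} = P_*[φ^{-1}(C_j)|C_i] the approximating transition matrix. For any initial distribution q(0) on the cells, the Markov-chain occupation probabilities q_j(n) = Σ_i q_i(0)(Wⁿ)_{i,j} converge as n → ∞ to P_*[C_j], the same limit as the exact occupation probabilities p_j(n) = P[φ^{-n}(C_j)] for any P ≪ μ. -/

import Mathlib

open MeasureTheory Filter Set Topology

set_option maxHeartbeats 1000000
set_option synthInstance.maxHeartbeats 1000000

lemma matrix_osc_step {I : Type*} [Fintype I] [DecidableEq I] [Nonempty I] (M : Matrix I I ℝ) (δ : ℝ)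
    (hδ0 : 0 ≤ δ) (hδ : ∀ i k, δ ≤ M i k) (hrow : ∀ i, ∑ k, M i k = 1) (u : I → ℝ) :
    Finset.univ.sup' Finset.univ_nonempty (fun i => ∑ k, M i k * u k)
      - Finset.univ.inf' Finset.univ_nonempty (fun i => ∑ k, M i k * u k)
    ≤ (1 - 2*δ) * (Finset.univ.sup' Finset.univ_nonempty u
      - Finset.univ.inf' Finset.univ_nonempty u) := by
  obtain ⟨j1, -, hj1⟩ := Finset.exists_mem_eq_sup' Finset.univ_nonempty u
  obtain ⟨j0, -, hj0⟩ := Finset.exists_mem_eq_inf' Finset.univ_nonempty u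
  set a := Finset.univ.inf' Finset.univ_nonempty u with ha
  set b := Finset.univ.sup' Finset.univ_nonempty u with hb
  have hub : ∀ k, u k ≤ b := fun k => Finset.le_sup' u (Finset.mem_univ k)
  have hua : ∀ k, a ≤ u k := fun k => Finset.inf'_le u (Finset.mem_univ k)
  have hab : a ≤ b := le_trans (hua j1) (hub j1)
  have hM0 : ∀ i k, (0:ℝ) ≤ M i k := fun i k => le_trans hδ0 (hδ i k)
  have hupper : ∀ i, ∑ k, M i k * u k ≤ b - δ * (b - a) := by
    intro i
    have h1 : ∑ k, M i k * (u k - b) ≤ M i j0 * (u j0 - b) := by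
      rw [Finset.sum_eq_sum_sdiff_singleton_add (Finset.mem_univ j0)
        (fun k => M i k * (u k - b))]
      have hle : ∑ k ∈ Finset.univ \ {j0}, M i k * (u k - b) ≤ 0 :=
        Finset.sum_nonpos fun k _ =>
          mul_nonpos_of_nonneg_of_nonpos (hM0 i k) (by linarith [hub k])
      linarith
    have h2 : M i j0 * (u j0 - b) ≤ δ * (a - b) := by
      rw [← hj0]
      exact mul_le_mul_of_nonpos_right (hδ i j0) (by linarith)
    have h3 : ∑ k, M i k * u k = ∑ k, M i k * (u k - b) + b := by
      simp only [mul_sub, Finset.sum_sub_distrib, ← Finset.sum_mul, hrow i]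
      ring
    linarith
  have hlower : ∀ i, a + δ * (b - a) ≤ ∑ k, M i k * u k := by
    intro i
    have h1 : M i j1 * (u j1 - a) ≤ ∑ k, M i k * (u k - a) := by
      rw [Finset.sum_eq_sum_sdiff_singleton_add (Finset.mem_univ j1)
        (fun k => M i k * (u k - a))]
      have hle : (0:ℝ) ≤ ∑ k ∈ Finset.univ \ {j1}, M i k * (u k - a) :=
        Finset.sum_nonneg fun k _ =>
          mul_nonneg (hM0 i k) (by linarith [hua k])
      linarith
    have h2 : δ * (b - a) ≤ M i j1 * (u j1 - a) := by
      rw [← hj1]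
      exact mul_le_mul_of_nonneg_right (hδ i j1) (by linarith)
    have h3 : ∑ k, M i k * u k = ∑ k, M i k * (u k - a) + a := by
      simp only [mul_sub, Finset.sum_sub_distrib, ← Finset.sum_mul, hrow i]
      ring
    linarith
  have h4 : Finset.univ.sup' Finset.univ_nonempty (fun i => ∑ k, M i k * u k)
      ≤ b - δ * (b - a) := Finset.sup'_le _ _ fun i _ => hupper i
  have h5 : a + δ * (b - a) ≤ Finset.univ.inf' Finset.univ_nonempty
      (fun i => ∑ k, M i k * u k) := Finset.le_inf' _ _ fun i _ => hlower i
  have : (1 - 2*δ) * (b - a) = b - a - 2*(δ*(b-a)) := by ring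
  linarith


lemma mixing_setIntegral_tendsto {X : Type*} [MeasurableSpace X] {μ : Measure X}
    [IsFiniteMeasure μ] {A : ℕ → Set X} {c : ℝ}
    (hmixA : ∀ s : Set X, MeasurableSet s →
      Tendsto (fun n => (μ (A n ∩ s)).toReal) atTop (𝓝 (c * (μ s).toReal)))
    {f : X → ℝ} (hf : Integrable f μ) :
    Tendsto (fun n => ∫ x in A n, f x ∂μ) atTop (𝓝 (c * ∫ x, f x ∂μ)) := by
  refine Integrable.induction (μ := μ)
    (P := fun g => Tendsto (fun n => ∫ x in A n, g x ∂μ) atTop (𝓝 (c * ∫ x, g x ∂μ)))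
    ?_ ?_ ?_ ?_ hf
  · -- indicators
    intro e s hs _
    have h1 : ∀ n, ∫ x in A n, s.indicator (fun _ => e) x ∂μ
        = (μ (A n ∩ s)).toReal * e := by
      intro n
      rw [setIntegral_indicator hs, setIntegral_const, smul_eq_mul]
      rfl
    have h2 : ∫ x, s.indicator (fun _ => e) x ∂μ = (μ s).toReal * e := by
      rw [integral_indicator_const e hs, smul_eq_mul]
      rfl
    simp_rw [h1, h2]
    simpa [mul_assoc] using (hmixA s hs).mul_const e
  · -- additivity
    intro f g _ hfi hgi hPf hPg
    have h1 : ∀ n, ∫ x in A n, (f + g) x ∂μ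
        = (∫ x in A n, f x ∂μ) + ∫ x in A n, g x ∂μ := by
      intro n
      simp only [Pi.add_apply]
      exact integral_add hfi.integrableOn hgi.integrableOn
    have h2 : ∫ x, (f + g) x ∂μ = (∫ x, f x ∂μ) + ∫ x, g x ∂μ := by
      simp only [Pi.add_apply]
      exact integral_add hfi hgi
    simp_rw [h1, h2, mul_add]
    exact hPf.add hPg
  · -- closedness in L¹
    have key : ∀ (B : Set X) (h : Lp ℝ 1 μ), |∫ x in B, h x ∂μ| ≤ ‖h‖ := by
      intro B h
      calc |∫ x in B, h x ∂μ| ≤ ∫ x in B, ‖h x‖ ∂μ := by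
            simpa [Real.norm_eq_abs] using norm_integral_le_integral_norm (μ := μ.restrict B) (⇑h)
        _ ≤ ∫ x, ‖h x‖ ∂μ := setIntegral_le_integral (L1.integrable_coeFn h).norm
            (Eventually.of_forall fun x => norm_nonneg _)
        _ = ‖h‖ := (L1.norm_eq_integral_norm h).symm
    have keydiff : ∀ (B : Set X) (f g : Lp ℝ 1 μ),
        |(∫ x in B, f x ∂μ) - ∫ x in B, g x ∂μ| ≤ ‖f - g‖ := by
      intro B f g
      have h1 : ∫ x in B, (f - g : Lp ℝ 1 μ) x ∂μ
          = (∫ x in B, f x ∂μ) - ∫ x in B, g x ∂μ := by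
        rw [integral_congr_ae (ae_restrict_of_ae (Lp.coeFn_sub f g))]
        exact integral_sub (L1.integrable_coeFn f).integrableOn
          (L1.integrable_coeFn g).integrableOn
      rw [← h1]
      exact key B (f - g)
    have keyint : ∀ f g : Lp ℝ 1 μ, |(∫ x, f x ∂μ) - ∫ x, g x ∂μ| ≤ ‖f - g‖ := by
      intro f g
      have := keydiff univ f g
      simpa [Measure.restrict_univ] using this
    refine IsSeqClosed.isClosed ?_
    intro F G hF hlim
    simp only [Set.mem_setOf_eq] at hF ⊢
    rw [Metric.tendsto_atTop] at hlim ⊢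
    intro ε hε
    have hc1 : (0:ℝ) < 1 + |c| := by positivity
    obtain ⟨K, hK⟩ := hlim (ε / (4 * (1 + |c|))) (by positivity)
    have hd := hK K le_rfl
    set k := K
    have hFk := hF k
    rw [Metric.tendsto_atTop] at hFk
    obtain ⟨N, hN⟩ := hFk (ε / 4) (by positivity)
    refine ⟨N, fun n hn => ?_⟩
    have h1 : |(∫ x in A n, (G : X → ℝ) x ∂μ) - ∫ x in A n, (F k : X → ℝ) x ∂μ| ≤ ‖G - F k‖ :=
      keydiff (A n) G (F k)
    have h2 := hN n hn
    rw [Real.dist_eq] at h2 ⊢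
    have h3 : |(∫ x, (F k : X → ℝ) x ∂μ) - ∫ x, (G : X → ℝ) x ∂μ| ≤ ‖F k - G‖ :=
      keyint (F k) G
    have hnorm : ‖G - F k‖ = dist (F k) G := by rw [dist_eq_norm, norm_sub_rev]
    have hnorm2 : ‖F k - G‖ = dist (F k) G := by rw [dist_eq_norm]
    rw [hnorm] at h1
    rw [hnorm2] at h3
    have hcd : |c * (∫ x, (F k : X → ℝ) x ∂μ) - c * ∫ x, (G : X → ℝ) x ∂μ|
        ≤ |c| * dist (F k) G := by
      rw [← mul_sub, abs_mul]
      exact mul_le_mul_of_nonneg_left h3 (abs_nonneg c)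
    have habs : |(∫ x in A n, (G : X → ℝ) x ∂μ) - c * ∫ x, (G : X → ℝ) x ∂μ|
        ≤ |(∫ x in A n, (G : X → ℝ) x ∂μ) - ∫ x in A n, (F k : X → ℝ) x ∂μ|
          + |(∫ x in A n, (F k : X → ℝ) x ∂μ) - c * ∫ x, (F k : X → ℝ) x ∂μ|
          + |c * (∫ x, (F k : X → ℝ) x ∂μ) - c * ∫ x, (G : X → ℝ) x ∂μ| := by
      have := abs_sub_le ((∫ x in A n, (G : X → ℝ) x ∂μ))
        (∫ x in A n, (F k : X → ℝ) x ∂μ) (c * ∫ x, (G : X → ℝ) x ∂μ)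
      have h5 := abs_sub_le ((∫ x in A n, (F k : X → ℝ) x ∂μ))
        (c * ∫ x, (F k : X → ℝ) x ∂μ) (c * ∫ x, (G : X → ℝ) x ∂μ)
      linarith
    have hcb : |c| * dist (F k) G ≤ |c| * (ε / (4 * (1 + |c|))) :=
      mul_le_mul_of_nonneg_left hd.le (abs_nonneg c)
    have hfrac : dist (F k) G + |c| * dist (F k) G ≤ (1 + |c|) * (ε / (4 * (1 + |c|))) := by
      have : dist (F k) G + |c| * dist (F k) G = (1 + |c|) * dist (F k) G := by ring
      rw [this]
      exact mul_le_mul_of_nonneg_left hd.le (by positivity)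
    have hsimp : (1 + |c|) * (ε / (4 * (1 + |c|))) = ε / 4 := by
      field_simp
    linarith
  · -- ae congruence
    intro f g hfg hfi hPf
    have h1 : ∀ n, ∫ x in A n, g x ∂μ = ∫ x in A n, f x ∂μ := fun n =>
      integral_congr_ae (ae_restrict_of_ae hfg.symm)
    have h2 : ∫ x, g x ∂μ = ∫ x, f x ∂μ := integral_congr_ae hfg.symm
    simp_rw [h1, h2]
    exact hPf


/-- For a mixing map φ with finite invariant measure μ and nontrivial finite partition
{C_i}, with W_{i,j} = P_*[φ^{-1}(C_j)|C_i] the approximating transition matrix: for any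
initial distribution q(0), the Markov-chain occupation probabilities
q_j(n) = Σ_i q_i(0)(Wⁿ)_{i,j} converge to P_*[C_j], the same limit as the exact
occupation probabilities p_j(n) = P[φ^{-n}(C_j)] for any probability measure P ≪ μ. -/
theorem approximating_chain_same_limit
    {X : Type*} [MeasurableSpace X] {I : Type*} [Fintype I] [DecidableEq I]
    (μ : Measure X) [IsFiniteMeasure μ]
    (φ : X → X) (hφ : MeasurePreserving φ μ μ)
    (hmix : ∀ A B : Set X, MeasurableSet A → MeasurableSet B →
      Tendsto (fun n => (μ (φ^[n] ⁻¹' A ∩ B)).toReal) atTop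
        (𝓝 ((μ A).toReal / (μ Set.univ).toReal * (μ B).toReal)))
    (C : I → Set X) (hmeas : ∀ i, MeasurableSet (C i))
    (hdisj : Pairwise (Function.onFun Disjoint C)) (hcover : ⋃ i, C i = Set.univ)
    (hpos : ∀ i, 0 < μ (C i))
    (W : Matrix I I ℝ)
    (hW : ∀ i j, W i j = (μ (φ ⁻¹' (C j) ∩ C i)).toReal / (μ (C i)).toReal)
    (j : I) :
    (∀ q0 : I → ℝ, (∀ i, 0 ≤ q0 i) → ∑ i, q0 i = 1 →
      Tendsto (fun n => ∑ i, q0 i * (W ^ n) i j) atTop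
        (𝓝 ((μ (C j)).toReal / (μ Set.univ).toReal))) ∧
    (∀ P : Measure X, IsProbabilityMeasure P → P ≪ μ →
      Tendsto (fun n => (P (φ^[n] ⁻¹' (C j))).toReal) atTop
        (𝓝 ((μ (C j)).toReal / (μ Set.univ).toReal))) := by
  haveI : Nonempty I := ⟨j⟩
  have hμfin : ∀ s : Set X, μ s ≠ ⊤ := fun s => measure_ne_top μ s
  have huniv_pos : 0 < μ Set.univ := lt_of_lt_of_le (hpos j) (measure_mono (subset_univ _))
  have hunivR : 0 < (μ Set.univ).toReal := ENNReal.toReal_pos huniv_pos.ne' (hμfin _)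
  have hCR : ∀ i, 0 < (μ (C i)).toReal := fun i =>
    ENNReal.toReal_pos (hpos i).ne' (hμfin _)
  set c : ℝ := (μ (C j)).toReal / (μ Set.univ).toReal with hc
  set π : I → ℝ := fun i => (μ (C i)).toReal / (μ Set.univ).toReal with hπ
  have hπj : π j = c := rfl
  -- decomposition along the partition
  have hsum : ∀ s : Set X, MeasurableSet s →
      (μ s).toReal = ∑ i, (μ (s ∩ C i)).toReal := by
    intro s hs
    have h1 : (⋃ i, s ∩ C i) = s := by
      rw [← inter_iUnion, hcover, inter_univ]
    have hd : Pairwise (Function.onFun Disjoint fun i => s ∩ C i) := fun i k hik =>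
      (hdisj hik).mono inter_subset_right inter_subset_right
    calc (μ s).toReal = (μ (⋃ i, s ∩ C i)).toReal := by rw [h1]
      _ = ∑ i, (μ (s ∩ C i)).toReal := by
          rw [measure_iUnion hd (fun i => hs.inter (hmeas i)), tsum_fintype,
            ENNReal.toReal_sum (fun i _ => hμfin _)]
  -- decomposition along preimages of the partition
  have hsum2 : ∀ s : Set X, MeasurableSet s →
      (μ s).toReal = ∑ k, (μ (φ ⁻¹' (C k) ∩ s)).toReal := by
    intro s hs
    have h1 : (⋃ k, φ ⁻¹' (C k) ∩ s) = s := by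
      rw [← iUnion_inter, ← preimage_iUnion, hcover, preimage_univ, univ_inter]
    have hd : Pairwise (Function.onFun Disjoint fun k => φ ⁻¹' (C k) ∩ s) := fun i k hik =>
      ((hdisj hik).preimage φ).mono inter_subset_left inter_subset_left
    calc (μ s).toReal = (μ (⋃ k, φ ⁻¹' (C k) ∩ s)).toReal := by rw [h1]
      _ = ∑ k, (μ (φ ⁻¹' (C k) ∩ s)).toReal := by
          rw [measure_iUnion hd
            (fun k => ((hmeas k).preimage hφ.measurable).inter hs), tsum_fintype,
            ENNReal.toReal_sum (fun k _ => hμfin _)]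
  -- W is a stochastic matrix
  have hrowW : ∀ i, ∑ k, W i k = 1 := by
    intro i
    simp_rw [hW]
    rw [← Finset.sum_div, ← hsum2 (C i) (hmeas i), div_self (hCR i).ne']
  have hWpos0 : ∀ i k, 0 ≤ W i k := fun i k => by
    rw [hW]; positivity
  -- powers are stochastic
  have hWpow : ∀ n, (∀ i k, 0 ≤ (W ^ n) i k) ∧ (∀ i, ∑ k, (W ^ n) i k = 1) := by
    intro n
    induction n with
    | zero =>
      refine ⟨fun i k => ?_, fun i => ?_⟩
      · rw [pow_zero, Matrix.one_apply]
        split <;> norm_num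
      · rw [pow_zero]
        simp [Matrix.one_apply]
    | succ n ih =>
      refine ⟨fun i k => ?_, fun i => ?_⟩
      · rw [pow_succ', Matrix.mul_apply]
        exact Finset.sum_nonneg fun m _ => mul_nonneg (hWpos0 i m) (ih.1 m k)
      · calc ∑ k, (W ^ (n+1)) i k = ∑ k, ∑ m, W i m * (W ^ n) m k := by
              simp [pow_succ', Matrix.mul_apply]
          _ = ∑ m, W i m * ∑ k, (W ^ n) m k := by
              rw [Finset.sum_comm]
              simp [Finset.mul_sum]
          _ = 1 := by
              simp_rw [ih.2, mul_one]
              exact hrowW i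
  -- stationarity
  have hπ0 : ∀ i, 0 ≤ π i := fun i => le_of_lt (div_pos (hCR i) hunivR)
  have hπsum : ∑ i, π i = 1 := by
    have h1 := hsum Set.univ MeasurableSet.univ
    simp only [univ_inter] at h1
    simp only [hπ]
    rw [← Finset.sum_div, ← h1, div_self hunivR.ne']
  have hstat1 : ∀ k, ∑ i, π i * W i k = π k := by
    intro k
    have h1 : ∀ i, π i * W i k
        = (μ (φ ⁻¹' (C k) ∩ C i)).toReal / (μ Set.univ).toReal := by
      intro i
      rw [hW]
      simp only [hπ]
      have hne : ((μ Set.univ).toReal * (μ (C i)).toReal) ≠ 0 :=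
        (mul_pos hunivR (hCR i)).ne'
      rw [div_mul_div_comm, div_eq_div_iff hne hunivR.ne']
      ring
    simp_rw [h1]
    rw [← Finset.sum_div, ← hsum _ ((hmeas k).preimage hφ.measurable),
      hφ.measure_preimage (hmeas k).nullMeasurableSet]
  have hstatn : ∀ n k, ∑ i, π i * (W ^ n) i k = π k := by
    intro n
    induction n with
    | zero =>
      intro k
      simp [Matrix.one_apply, mul_ite, Finset.sum_ite_eq']
    | succ n ih =>
      intro k
      calc ∑ i, π i * (W ^ (n+1)) i k
          = ∑ i, ∑ m, π i * W i m * (W ^ n) m k := by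
            simp [pow_succ', Matrix.mul_apply, Finset.mul_sum, mul_assoc]
        _ = ∑ m, (∑ i, π i * W i m) * (W ^ n) m k := by
            rw [Finset.sum_comm]
            simp [Finset.sum_mul]
        _ = ∑ m, π m * (W ^ n) m k := by simp_rw [hstat1]
        _ = π k := ih k
  -- positivity along paths
  have hpath : ∀ n (i k : I), 0 < μ (φ^[n] ⁻¹' (C k) ∩ C i) → 0 < (W ^ n) i k := by
    intro n
    induction n with
    | zero =>
      intro i k h
      simp only [Function.iterate_zero, Set.preimage_id] at h
      have hik : i = k := by
        by_contra hne
        have hd : Disjoint (C k) (C i) := hdisj fun hh => hne hh.symm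
        rw [Set.disjoint_iff_inter_eq_empty] at hd
        rw [hd] at h
        simp at h
      subst hik
      rw [pow_zero, Matrix.one_apply_eq]
      norm_num
    | succ n ih =>
      intro i k h
      have hiter : φ^[n+1] ⁻¹' (C k) = φ ⁻¹' (φ^[n] ⁻¹' (C k)) := by
        rw [Function.iterate_succ, Set.preimage_comp]
      rw [hiter] at h
      set B := φ^[n] ⁻¹' (C k) with hB
      have hBmeas : MeasurableSet B := (hmeas k).preimage (hφ.measurable.iterate n)
      have hcov : (⋃ m, (φ ⁻¹' B ∩ φ ⁻¹' (C m) ∩ C i)) = φ ⁻¹' B ∩ C i := by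
        rw [← Set.iUnion_inter, ← Set.inter_iUnion, ← Set.preimage_iUnion, hcover,
          Set.preimage_univ, Set.inter_univ]
      obtain ⟨m, hm⟩ : ∃ m, 0 < μ (φ ⁻¹' B ∩ φ ⁻¹' (C m) ∩ C i) := by
        by_contra hcon
        push_neg at hcon
        have hz : ∀ m, μ (φ ⁻¹' B ∩ φ ⁻¹' (C m) ∩ C i) = 0 := fun m =>
          le_zero_iff.mp (hcon m)
        have h0 : μ (φ ⁻¹' B ∩ C i) = 0 := by
          rw [← hcov]
          exact measure_iUnion_null hz
        rw [h0] at h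
        simp at h
      have hWik : 0 < W i m := by
        have hle : μ (φ ⁻¹' B ∩ φ ⁻¹' (C m) ∩ C i) ≤ μ (φ ⁻¹' (C m) ∩ C i) :=
          measure_mono fun x hx => ⟨hx.1.2, hx.2⟩
        rw [hW]
        exact div_pos (ENNReal.toReal_pos (lt_of_lt_of_le hm hle).ne' (hμfin _)) (hCR i)
      have hWnmk : 0 < (W ^ n) m k := by
        apply ih m k
        have hle : μ (φ ⁻¹' B ∩ φ ⁻¹' (C m) ∩ C i) ≤ μ (φ ⁻¹' (B ∩ C m)) := by
          rw [Set.preimage_inter]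
          exact measure_mono inter_subset_left
        rw [hφ.measure_preimage (hBmeas.inter (hmeas m)).nullMeasurableSet] at hle
        exact lt_of_lt_of_le hm hle
      rw [pow_succ', Matrix.mul_apply]
      exact Finset.sum_pos'
        (fun m' _ => mul_nonneg (hWpos0 i m') ((hWpow n).1 m' k))
        ⟨m, Finset.mem_univ m, mul_pos hWik hWnmk⟩
  -- eventual strict positivity of all entries
  have hev : ∀ᶠ n in atTop, ∀ p : I × I, 0 < (W ^ n) p.1 p.2 := by
    rw [Filter.eventually_all]
    intro p
    have hmixp := hmix (C p.2) (C p.1) (hmeas p.2) (hmeas p.1)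
    have hlimpos : 0 < (μ (C p.2)).toReal / (μ Set.univ).toReal * (μ (C p.1)).toReal :=
      mul_pos (div_pos (hCR p.2) hunivR) (hCR p.1)
    have hevpos : ∀ᶠ n in atTop, 0 < (μ (φ^[n] ⁻¹' (C p.2) ∩ C p.1)).toReal :=
      hmixp.eventually (eventually_gt_nhds hlimpos)
    filter_upwards [hevpos] with n hn
    exact hpath n p.1 p.2 (ENNReal.toReal_pos_iff.mp hn).1
  obtain ⟨N₀, hN₀⟩ := Filter.eventually_atTop.mp hev
  set N := max N₀ 1 with hNdef
  have hN1 : 1 ≤ N := le_max_right _ _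
  have hNpos : ∀ i k, 0 < (W ^ N) i k := fun i k => hN₀ N (le_max_left _ _) (i, k)
  have hne2 : (Finset.univ : Finset (I × I)).Nonempty := Finset.univ_nonempty
  set δ₀ := Finset.univ.inf' hne2 (fun p : I × I => (W ^ N) p.1 p.2) with hδ₀
  have hδ₀pos : 0 < δ₀ := by
    rw [hδ₀, Finset.lt_inf'_iff]
    exact fun p _ => hNpos p.1 p.2
  have hδ₀le : ∀ i k, δ₀ ≤ (W ^ N) i k := fun i k =>
    Finset.inf'_le _ (Finset.mem_univ (i, k))
  set δ := min δ₀ (1/2 : ℝ) with hδdef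
  have hδpos : 0 < δ := lt_min hδ₀pos (by norm_num)
  have hδhalf : δ ≤ 1/2 := min_le_right _ _
  have hδle : ∀ i k, δ ≤ (W ^ N) i k := fun i k =>
    le_trans (min_le_left _ _) (hδ₀le i k)
  set r := 1 - 2*δ with hrdef
  have hr0 : 0 ≤ r := by rw [hrdef]; linarith
  have hr1 : r < 1 := by rw [hrdef]; linarith
  -- the vector iteration
  set u : ℕ → I → ℝ := fun n i => (W ^ n) i j with hu
  have hstep : ∀ m n (i : I), u (m + n) i = ∑ k, (W ^ m) i k * u n k := by
    intro m n i
    simp only [hu]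
    rw [pow_add, Matrix.mul_apply]
  set osc : ℕ → ℝ := fun n =>
    Finset.univ.sup' Finset.univ_nonempty (u n)
      - Finset.univ.inf' Finset.univ_nonempty (u n) with hosc
  have hosc_nonneg : ∀ n, 0 ≤ osc n := by
    intro n
    have h1 := Finset.inf'_le (u n) (Finset.mem_univ j)
    have h2 := Finset.le_sup' (u n) (Finset.mem_univ j)
    simp only [hosc]
    linarith
  have hfun : ∀ m n, u (m + n) = fun i => ∑ k, (W ^ m) i k * u n k := fun m n =>
    funext (hstep m n)
  have hmono : ∀ m n, osc (m + n) ≤ osc n := by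
    intro m n
    have h := matrix_osc_step (W ^ m) 0 le_rfl
      (fun i k => (hWpow m).1 i k) (hWpow m).2 (u n)
    simp only [hosc, hfun m n]
    simpa using h
  have hcontr : ∀ n, osc (N + n) ≤ r * osc n := by
    intro n
    have h := matrix_osc_step (W ^ N) δ hδpos.le hδle (hWpow N).2 (u n)
    simp only [hosc, hfun N n]
    simpa [hrdef] using h
  have hgeom : ∀ k n, osc (N*k + n) ≤ r^k * osc n := by
    intro k
    induction k with
    | zero => intro n; simp
    | succ k ihk =>
      intro n
      have h1 : N*(k+1) + n = N + (N*k + n) := by ring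
      rw [h1]
      calc osc (N + (N*k + n)) ≤ r * osc (N*k + n) := hcontr _
        _ ≤ r * (r^k * osc n) := mul_le_mul_of_nonneg_left (ihk n) hr0
        _ = r^(k+1) * osc n := by ring
  have hosc_le : ∀ n, osc n ≤ r^(n/N) * osc 0 := by
    intro n
    have h1 : n % N + N*(n/N) = n := Nat.mod_add_div n N
    calc osc n = osc (n % N + N*(n/N)) := by rw [h1]
      _ ≤ osc (N*(n/N)) := hmono _ _
      _ = osc (N*(n/N) + 0) := by rw [Nat.add_zero]
      _ ≤ r^(n/N) * osc 0 := hgeom _ 0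
  have hNpos' : 0 < N := lt_of_lt_of_le one_pos hN1
  have hdivtop : Tendsto (fun n : ℕ => n / N) atTop atTop := by
    rw [Filter.tendsto_atTop]
    intro b
    filter_upwards [Filter.eventually_ge_atTop (b*N)] with n hn
    exact (Nat.le_div_iff_mul_le hNpos').mpr hn
  have hrpow : Tendsto (fun n : ℕ => r^(n/N) * osc 0) atTop (𝓝 0) := by
    have h1 : Tendsto (fun k : ℕ => r^k) atTop (𝓝 0) :=
      tendsto_pow_atTop_nhds_zero_of_lt_one hr0 hr1
    have h2 := (h1.comp hdivtop).mul_const (osc 0)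
    simpa using h2
  have hosc0 : Tendsto osc atTop (𝓝 0) := squeeze_zero hosc_nonneg hosc_le hrpow
  -- each entry is within osc n of π j
  have hbound : ∀ n (i : I), |u n i - π j| ≤ osc n := by
    intro n i
    have h1 : Finset.univ.inf' Finset.univ_nonempty (u n) ≤ u n i :=
      Finset.inf'_le _ (Finset.mem_univ i)
    have h2 : u n i ≤ Finset.univ.sup' Finset.univ_nonempty (u n) :=
      Finset.le_sup' _ (Finset.mem_univ i)
    have h3 : π j = ∑ i', π i' * u n i' := (hstatn n j).symm
    have h4 : ∑ i', π i' * u n i' ≤ Finset.univ.sup' Finset.univ_nonempty (u n) := by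
      calc ∑ i', π i' * u n i'
          ≤ ∑ i', π i' * Finset.univ.sup' Finset.univ_nonempty (u n) :=
            Finset.sum_le_sum fun i' _ => mul_le_mul_of_nonneg_left
              (Finset.le_sup' _ (Finset.mem_univ i')) (hπ0 i')
        _ = Finset.univ.sup' Finset.univ_nonempty (u n) := by
            rw [← Finset.sum_mul, hπsum, one_mul]
    have h5 : Finset.univ.inf' Finset.univ_nonempty (u n) ≤ ∑ i', π i' * u n i' := by
      calc Finset.univ.inf' Finset.univ_nonempty (u n)
          = ∑ i', π i' * Finset.univ.inf' Finset.univ_nonempty (u n) := by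
            rw [← Finset.sum_mul, hπsum, one_mul]
        _ ≤ ∑ i', π i' * u n i' :=
            Finset.sum_le_sum fun i' _ => mul_le_mul_of_nonneg_left
              (Finset.inf'_le _ (Finset.mem_univ i')) (hπ0 i')
    rw [abs_sub_le_iff]
    simp only [hosc]
    constructor
    · rw [h3]; linarith
    · rw [h3]; linarith
  constructor
  · -- Part 1: Markov chain occupation probabilities
    intro q0 hq0 hq1
    have key : ∀ n, |(∑ i, q0 i * u n i) - π j| ≤ osc n := by
      intro n
      have h1 : (∑ i, q0 i * u n i) - π j = ∑ i, q0 i * (u n i - π j) := by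
        simp only [mul_sub, Finset.sum_sub_distrib, ← Finset.sum_mul, hq1, one_mul]
      rw [h1]
      calc |∑ i, q0 i * (u n i - π j)| ≤ ∑ i, |q0 i * (u n i - π j)| :=
            Finset.abs_sum_le_sum_abs _ _
        _ ≤ ∑ i, q0 i * osc n := Finset.sum_le_sum fun i _ => by
            rw [abs_mul, abs_of_nonneg (hq0 i)]
            exact mul_le_mul_of_nonneg_left (hbound n i) (hq0 i)
        _ = osc n := by rw [← Finset.sum_mul, hq1, one_mul]
    rw [tendsto_iff_dist_tendsto_zero]
    simp only [Real.dist_eq]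
    exact squeeze_zero (fun n => abs_nonneg _) key hosc0
  · -- Part 2: exact occupation probabilities
    intro P hP hPμ
    have hf : Integrable (fun x => (P.rnDeriv μ x).toReal) μ :=
      Measure.integrable_toReal_rnDeriv
    have hmixA : ∀ s : Set X, MeasurableSet s →
        Tendsto (fun n => (μ (φ^[n] ⁻¹' (C j) ∩ s)).toReal) atTop
          (𝓝 (c * (μ s).toReal)) := fun s hs => hmix (C j) s (hmeas j) hs
    have h1 := mixing_setIntegral_tendsto hmixA hf
    have h2 : ∀ n, ∫ x in φ^[n] ⁻¹' (C j), (P.rnDeriv μ x).toReal ∂μ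
        = (P (φ^[n] ⁻¹' (C j))).toReal := fun n =>
      Measure.setIntegral_toReal_rnDeriv hPμ _
    have h3 : ∫ x, (P.rnDeriv μ x).toReal ∂μ = 1 := by
      rw [Measure.integral_toReal_rnDeriv hPμ, Measure.real, measure_univ, ENNReal.toReal_one]
    rw [h3, mul_one] at h1
    simp_rw [h2] at h1
    exact h1
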